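/- arXiv:1611.01081 — 6 statements merged into one kernel-verified Lean document; each statement's English description precedes it below -/
import Mathlib

section
/- Suppose for each k ∈ ℕ a set H k of smooth vector fields on M is given such that: H is monotone in k; each H k is closed under addition; and each H k is closed under multiplication by smooth real-valued functions (if X ∈ H k and h : M → ℝ is smooth then h·X ∈ H k). Let i, j ≥ 1, let X ∈ H i and Y ∈ H j be smooth vector fields, and let f, g : M → ℝ be smooth. Then the vector field ⁅f·X, g·Y⁆ − (f·g)·⁅X,Y⁆ belongs to H (i+j−1). (In other words, modulo sections of order i+j−1, the Lie bracket induces a C^∞(M)-bilinear bracket: ⁅fX, gY⁆ ≡ fg⁅X,Y⁆ mod H^{i+j−1}.) -/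
open Set Manifold

noncomputable section

namespace TangentGroupoid

variable {𝕜 : Type*} [NontriviallyNormedField 𝕜]
  {E : Type*} [NormedAddCommGroup E] [NormedSpace 𝕜 E]
  {H : Type*} [TopologicalSpace H] {I : ModelWithCorners 𝕜 E H}
  {M : Type*} [TopologicalSpace M] [ChartedSpace H M]
  {E' : Type*} [NormedAddCommGroup E'] [NormedSpace 𝕜 E']
  {H' : Type*} [TopologicalSpace H'] {I' : ModelWithCorners 𝕜 E' H'}
  {M' : Type*} [TopologicalSpace M'] [ChartedSpace H' M']

variable (I I') in
/-- The pullback of a vector field under a map between manifolds, within a set. -/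
def mpullbackWithin (f : M → M') (V : ∀ x : M', TangentSpace I' x) (s : Set M) (x : M) :
    TangentSpace I x :=
  (mfderivWithin I I' f s x).inverse (V (f x))

variable (I) in
/-- The Lie bracket of two vector fields on a manifold, within a set. -/
def mlieBracketWithin (V W : ∀ x : M, TangentSpace I x) (s : Set M) (x₀ : M) :
    TangentSpace I x₀ :=
  mpullbackWithin I 𝓘(𝕜, E) (extChartAt I x₀)
    (VectorField.lieBracketWithin 𝕜
      (mpullbackWithin 𝓘(𝕜, E) I (extChartAt I x₀).symm V (range I))
      (mpullbackWithin 𝓘(𝕜, E) I (extChartAt I x₀).symm W (range I))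
      ((extChartAt I x₀).symm ⁻¹' s ∩ range I)) s x₀

variable (I) in
/-- The Lie bracket of two vector fields on a manifold. -/
def mlieBracket (V W : ∀ x : M, TangentSpace I x) (x₀ : M) : TangentSpace I x₀ :=
  mlieBracketWithin I V W univ x₀

end TangentGroupoid

open TangentGroupoid

section BracketHelpers

set_option linter.unusedSectionVars false

private lemma flat_lieBracket_smul
    {E : Type*} [NormedAddCommGroup E] [NormedSpace ℝ E]
    (V W : E → E) (a b : E → ℝ) (z : E)
    (hV : DifferentiableAt ℝ V z) (hW : DifferentiableAt ℝ W z)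
    (ha : DifferentiableAt ℝ a z) (hb : DifferentiableAt ℝ b z) :
    VectorField.lieBracket ℝ (fun y => a y • V y) (fun y => b y • W y) z
      = (a z * b z) • VectorField.lieBracket ℝ V W z
        + (a z * fderiv ℝ b z (V z)) • W z - (b z * fderiv ℝ a z (W z)) • V z := by
  simp only [VectorField.lieBracket]
  rw [fderiv_fun_smul hb hW, fderiv_fun_smul ha hV]
  simp only [ContinuousLinearMap.add_apply, ContinuousLinearMap.coe_smul',
    Pi.smul_apply, ContinuousLinearMap.smulRight_apply, map_smul, smul_eq_mul]
  module

variable {E : Type*} [NormedAddCommGroup E] [NormedSpace ℝ E] [FiniteDimensional ℝ E]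
  {M : Type*} [TopologicalSpace M] [ChartedSpace E M] [IsManifold 𝓘(ℝ, E) (⊤ : ℕ∞) M]

/-- The coordinate representation of a smooth section is smooth. -/
private lemma tcc_smoothAt (X : ∀ x : M, TangentSpace 𝓘(ℝ, E) x)
    (hX : ContMDiff 𝓘(ℝ, E) 𝓘(ℝ, E).tangent (⊤ : ℕ∞)
      (fun x : M => (⟨x, X x⟩ : TangentBundle 𝓘(ℝ, E) M))) (x₀ : M) :
    ContMDiffAt 𝓘(ℝ, E) 𝓘(ℝ, E) (⊤ : ℕ∞)
      (fun x => tangentCoordChange 𝓘(ℝ, E) x x₀ x (X x)) x₀ := by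
  have h := (Bundle.contMDiffAt_section (s := X) x₀).1 (hX x₀)
  convert h using 2
  rw [TangentBundle.trivializationAt_apply]
  rfl

/-- The derivative of the extended chart equals the tangent coordinate change. -/
private lemma mfderiv_ext_eq_tcc (x₀ : M) {x : M} (hx : x ∈ (extChartAt 𝓘(ℝ, E) x₀).source) :
    mfderiv 𝓘(ℝ, E) 𝓘(ℝ, E) (extChartAt 𝓘(ℝ, E) x₀) x = tangentCoordChange 𝓘(ℝ, E) x x₀ x := by
  have hcoe : ⇑(extChartAt 𝓘(ℝ, E) x₀) = ⇑(chartAt E x₀) := by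
    ext y; simp [extChartAt_coe]
  rw [hcoe]
  rw [extChartAt_source] at hx
  exact mfderiv_chartAt_eq_tangentCoordChange hx

private lemma mfdW_symm (x₀ : M) (z : E) :
    mfderivWithin 𝓘(ℝ, E) 𝓘(ℝ, E) (extChartAt 𝓘(ℝ, E) x₀).symm (range 𝓘(ℝ, E)) z
      = mfderiv 𝓘(ℝ, E) 𝓘(ℝ, E) (extChartAt 𝓘(ℝ, E) x₀).symm z := by
  rw [ModelWithCorners.range_eq_univ, mfderivWithin_univ]

/-- inverse of the derivative of the inverse chart is the derivative of the chart -/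
private lemma inv_mfderiv_symm (x₀ : M) {z : E} (hz : z ∈ (extChartAt 𝓘(ℝ, E) x₀).target) :
    (mfderiv 𝓘(ℝ, E) 𝓘(ℝ, E) (extChartAt 𝓘(ℝ, E) x₀).symm z).inverse
      = mfderiv 𝓘(ℝ, E) 𝓘(ℝ, E) (extChartAt 𝓘(ℝ, E) x₀) ((extChartAt 𝓘(ℝ, E) x₀).symm z) := by
  have h1 := mfderivWithin_extChartAt_symm_comp_mfderiv_extChartAt (I := 𝓘(ℝ, E)) (x := x₀) hz
  have h2 := mfderiv_extChartAt_comp_mfderivWithin_extChartAt_symm (I := 𝓘(ℝ, E)) (x := x₀) hz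
  rw [mfdW_symm] at h1 h2
  exact ContinuousLinearMap.inverse_eq h1 h2

private lemma mpullbackWithin_symm_apply (V : ∀ x : M, TangentSpace 𝓘(ℝ, E) x) (x₀ : M)
    (z : E) :
    mpullbackWithin 𝓘(ℝ, E) 𝓘(ℝ, E) (extChartAt 𝓘(ℝ, E) x₀).symm V univ z
      = (mfderiv 𝓘(ℝ, E) 𝓘(ℝ, E) (extChartAt 𝓘(ℝ, E) x₀).symm z).inverse
          (V ((extChartAt 𝓘(ℝ, E) x₀).symm z)) := by
  rw [mpullbackWithin, mfderivWithin_univ]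

/-- Normal form for `mlieBracket` in the boundaryless vector-space model. -/
private lemma mlieBracket_eq (V W : ∀ x : M, TangentSpace 𝓘(ℝ, E) x) (x₀ : M) :
    mlieBracket 𝓘(ℝ, E) V W x₀
      = (mfderiv 𝓘(ℝ, E) 𝓘(ℝ, E) (extChartAt 𝓘(ℝ, E) x₀) x₀).inverse
        ((VectorField.lieBracket ℝ
          (mpullbackWithin 𝓘(ℝ, E) 𝓘(ℝ, E) (extChartAt 𝓘(ℝ, E) x₀).symm V univ)
          (mpullbackWithin 𝓘(ℝ, E) 𝓘(ℝ, E) (extChartAt 𝓘(ℝ, E) x₀).symm W univ)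
          (extChartAt 𝓘(ℝ, E) x₀ x₀) : E)) := by
  simp only [mlieBracket, mlieBracketWithin, ModelWithCorners.range_eq_univ,
    Set.preimage_univ, Set.univ_inter, Set.inter_univ, VectorField.lieBracketWithin_univ]
  show (mfderivWithin _ _ _ univ x₀).inverse _ = _
  rw [mfderivWithin_univ]; exact congrArg _ (congrFun VectorField.lieBracketWithin_univ _)

/-- On the chart target, the pullback coincides with the coordinate representation. -/
private lemma mpullback_eq_tcc (X : ∀ x : M, TangentSpace 𝓘(ℝ, E) x) (x₀ : M)
    {z : E} (hz : z ∈ (extChartAt 𝓘(ℝ, E) x₀).target) :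
    mpullbackWithin 𝓘(ℝ, E) 𝓘(ℝ, E) (extChartAt 𝓘(ℝ, E) x₀).symm X univ z
      = tangentCoordChange 𝓘(ℝ, E) ((extChartAt 𝓘(ℝ, E) x₀).symm z) x₀
          ((extChartAt 𝓘(ℝ, E) x₀).symm z) (X ((extChartAt 𝓘(ℝ, E) x₀).symm z)) := by
  rw [mpullbackWithin_symm_apply, inv_mfderiv_symm x₀ hz,
    mfderiv_ext_eq_tcc x₀ ((extChartAt 𝓘(ℝ, E) x₀).map_target hz)]
  rfl

private lemma contMDiffAt_symm_ext (x₀ : M) :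
    ContMDiffAt 𝓘(ℝ, E) 𝓘(ℝ, E) (⊤ : ℕ∞) (extChartAt 𝓘(ℝ, E) x₀).symm
      (extChartAt 𝓘(ℝ, E) x₀ x₀) :=
  (contMDiffOn_extChartAt_symm x₀).contMDiffAt (extChartAt_target_mem_nhds x₀)

/-- Differentiability of the pullback of a smooth section. -/
private lemma pullback_diffAt (X : ∀ x : M, TangentSpace 𝓘(ℝ, E) x)
    (hX : ContMDiff 𝓘(ℝ, E) 𝓘(ℝ, E).tangent (⊤ : ℕ∞)
      (fun x : M => (⟨x, X x⟩ : TangentBundle 𝓘(ℝ, E) M))) (x₀ : M) :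
    DifferentiableAt ℝ
      (mpullbackWithin 𝓘(ℝ, E) 𝓘(ℝ, E) (extChartAt 𝓘(ℝ, E) x₀).symm X univ)
      (extChartAt 𝓘(ℝ, E) x₀ x₀) := by
  have hsm : ContMDiffAt 𝓘(ℝ, E) 𝓘(ℝ, E) (⊤ : ℕ∞)
      (fun z => tangentCoordChange 𝓘(ℝ, E) ((extChartAt 𝓘(ℝ, E) x₀).symm z) x₀
        ((extChartAt 𝓘(ℝ, E) x₀).symm z) (X ((extChartAt 𝓘(ℝ, E) x₀).symm z)))
      (extChartAt 𝓘(ℝ, E) x₀ x₀) := by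
    have h0 : ContMDiffAt 𝓘(ℝ, E) 𝓘(ℝ, E) (⊤ : ℕ∞)
        (fun x => tangentCoordChange 𝓘(ℝ, E) x x₀ x (X x))
        ((extChartAt 𝓘(ℝ, E) x₀).symm (extChartAt 𝓘(ℝ, E) x₀ x₀)) := by
      rw [extChartAt_to_inv]; exact tcc_smoothAt X hX x₀
    exact h0.comp _ (contMDiffAt_symm_ext x₀)
  have hd : DifferentiableAt ℝ _ _ := (hsm.mdifferentiableAt (by simp)).differentiableAt
  have heq : (mpullbackWithin 𝓘(ℝ, E) 𝓘(ℝ, E) (extChartAt 𝓘(ℝ, E) x₀).symm X univ)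
      =ᶠ[nhds (extChartAt 𝓘(ℝ, E) x₀ x₀)]
      (fun z => tangentCoordChange 𝓘(ℝ, E) ((extChartAt 𝓘(ℝ, E) x₀).symm z) x₀
        ((extChartAt 𝓘(ℝ, E) x₀).symm z) (X ((extChartAt 𝓘(ℝ, E) x₀).symm z))) := by
    filter_upwards [extChartAt_target_mem_nhds x₀] with z hz
    exact mpullback_eq_tcc X x₀ hz
  exact (heq.differentiableAt_iff).2 hd

end BracketHelpers

section KeyFormula

set_option linter.unusedSectionVars false

variable {E : Type*} [NormedAddCommGroup E] [NormedSpace ℝ E] [FiniteDimensional ℝ E]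
  {M : Type*} [TopologicalSpace M] [ChartedSpace E M] [IsManifold 𝓘(ℝ, E) (⊤ : ℕ∞) M]

/-- The derivative of `g` along the vector field `X`. -/
private def derivAlong (g : M → ℝ) (X : ∀ x : M, TangentSpace 𝓘(ℝ, E) x) (x : M) : ℝ :=
  mfderiv 𝓘(ℝ, E) 𝓘(ℝ) g x (X x)

private lemma mlieBracket_smul_formula
    (X Y : ∀ x : M, TangentSpace 𝓘(ℝ, E) x)
    (hX : ContMDiff 𝓘(ℝ, E) 𝓘(ℝ, E).tangent (⊤ : ℕ∞)
      (fun x : M => (⟨x, X x⟩ : TangentBundle 𝓘(ℝ, E) M)))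
    (hY : ContMDiff 𝓘(ℝ, E) 𝓘(ℝ, E).tangent (⊤ : ℕ∞)
      (fun x : M => (⟨x, Y x⟩ : TangentBundle 𝓘(ℝ, E) M)))
    (f g : M → ℝ)
    (hf : ContMDiff 𝓘(ℝ, E) 𝓘(ℝ) (⊤ : ℕ∞) f) (hg : ContMDiff 𝓘(ℝ, E) 𝓘(ℝ) (⊤ : ℕ∞) g) (x₀ : M) :
    mlieBracket 𝓘(ℝ, E) (fun y => f y • X y) (fun y => g y • Y y) x₀
      = (f x₀ * g x₀) • mlieBracket 𝓘(ℝ, E) X Y x₀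
        + (f x₀ * derivAlong g X x₀) • Y x₀
        - (g x₀ * derivAlong f Y x₀) • X x₀ := by
  have hx₀s := mem_extChartAt_source (I := 𝓘(ℝ, E)) x₀
  have hz₀ : extChartAt 𝓘(ℝ, E) x₀ x₀ ∈ (extChartAt 𝓘(ℝ, E) x₀).target :=
    (extChartAt 𝓘(ℝ, E) x₀).map_source hx₀s
  have hinv : (extChartAt 𝓘(ℝ, E) x₀).symm (extChartAt 𝓘(ℝ, E) x₀ x₀) = x₀ :=
    extChartAt_to_inv x₀
  have hA := isInvertible_mfderiv_extChartAt (I := 𝓘(ℝ, E)) hx₀s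
  -- the pullback of `f • X` is `(f ∘ symm) • (pullback of X)`
  have hPfX : mpullbackWithin 𝓘(ℝ, E) 𝓘(ℝ, E) (extChartAt 𝓘(ℝ, E) x₀).symm
      (fun y => f y • X y) univ
      = fun z => f ((extChartAt 𝓘(ℝ, E) x₀).symm z)
          • mpullbackWithin 𝓘(ℝ, E) 𝓘(ℝ, E) (extChartAt 𝓘(ℝ, E) x₀).symm X univ z := by
    funext z
    rw [mpullbackWithin_symm_apply, mpullbackWithin_symm_apply]
    exact ContinuousLinearMap.map_smul _ _ _
  have hPgY : mpullbackWithin 𝓘(ℝ, E) 𝓘(ℝ, E) (extChartAt 𝓘(ℝ, E) x₀).symm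
      (fun y => g y • Y y) univ
      = fun z => g ((extChartAt 𝓘(ℝ, E) x₀).symm z)
          • mpullbackWithin 𝓘(ℝ, E) 𝓘(ℝ, E) (extChartAt 𝓘(ℝ, E) x₀).symm Y univ z := by
    funext z
    rw [mpullbackWithin_symm_apply, mpullbackWithin_symm_apply]
    exact ContinuousLinearMap.map_smul _ _ _
  -- differentiability of the coefficient functions in the chart
  have hsymm_md : MDifferentiableAt 𝓘(ℝ, E) 𝓘(ℝ, E) (extChartAt 𝓘(ℝ, E) x₀).symm
      (extChartAt 𝓘(ℝ, E) x₀ x₀) := (contMDiffAt_symm_ext x₀).mdifferentiableAt (by simp)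
  have hfd : DifferentiableAt ℝ (fun z => f ((extChartAt 𝓘(ℝ, E) x₀).symm z))
      (extChartAt 𝓘(ℝ, E) x₀ x₀) := by
    have h0 : ContMDiffAt 𝓘(ℝ, E) 𝓘(ℝ) (⊤ : ℕ∞) f
        ((extChartAt 𝓘(ℝ, E) x₀).symm (extChartAt 𝓘(ℝ, E) x₀ x₀)) := by
      rw [hinv]; exact hf x₀
    exact ((h0.comp _ (contMDiffAt_symm_ext x₀)).mdifferentiableAt (by simp)).differentiableAt
  have hgd : DifferentiableAt ℝ (fun z => g ((extChartAt 𝓘(ℝ, E) x₀).symm z))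
      (extChartAt 𝓘(ℝ, E) x₀ x₀) := by
    have h0 : ContMDiffAt 𝓘(ℝ, E) 𝓘(ℝ) (⊤ : ℕ∞) g
        ((extChartAt 𝓘(ℝ, E) x₀).symm (extChartAt 𝓘(ℝ, E) x₀ x₀)) := by
      rw [hinv]; exact hg x₀
    exact ((h0.comp _ (contMDiffAt_symm_ext x₀)).mdifferentiableAt (by simp)).differentiableAt
  -- value of the pullbacks at the base point
  have hPXz : mpullbackWithin 𝓘(ℝ, E) 𝓘(ℝ, E) (extChartAt 𝓘(ℝ, E) x₀).symm X univ
      (extChartAt 𝓘(ℝ, E) x₀ x₀)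
      = mfderiv 𝓘(ℝ, E) 𝓘(ℝ, E) (extChartAt 𝓘(ℝ, E) x₀) x₀ (X x₀) := by
    rw [mpullbackWithin_symm_apply, inv_mfderiv_symm x₀ hz₀, hinv]
  have hPYz : mpullbackWithin 𝓘(ℝ, E) 𝓘(ℝ, E) (extChartAt 𝓘(ℝ, E) x₀).symm Y univ
      (extChartAt 𝓘(ℝ, E) x₀ x₀)
      = mfderiv 𝓘(ℝ, E) 𝓘(ℝ, E) (extChartAt 𝓘(ℝ, E) x₀) x₀ (Y x₀) := by
    rw [mpullbackWithin_symm_apply, inv_mfderiv_symm x₀ hz₀, hinv]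
  -- the inverse of the chart derivative undoes the chart derivative
  have hAinv : ∀ v : TangentSpace 𝓘(ℝ, E) x₀,
      (mfderiv 𝓘(ℝ, E) 𝓘(ℝ, E) (extChartAt 𝓘(ℝ, E) x₀) x₀).inverse
        (mfderiv 𝓘(ℝ, E) 𝓘(ℝ, E) (extChartAt 𝓘(ℝ, E) x₀) x₀ v) = v := fun v =>
    hA.inverse_apply_eq.2 rfl
  have hBA : ∀ v : TangentSpace 𝓘(ℝ, E) x₀,
      mfderiv 𝓘(ℝ, E) 𝓘(ℝ, E) (extChartAt 𝓘(ℝ, E) x₀).symm (extChartAt 𝓘(ℝ, E) x₀ x₀)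
        (mfderiv 𝓘(ℝ, E) 𝓘(ℝ, E) (extChartAt 𝓘(ℝ, E) x₀) x₀ v) = v := by
    intro v
    have h1 := mfderivWithin_extChartAt_symm_comp_mfderiv_extChartAt' (I := 𝓘(ℝ, E)) hx₀s
    rw [mfdW_symm] at h1
    exact DFunLike.congr_fun h1 v
  -- chain rule for the coefficients
  have hchain_g : fderiv ℝ (fun z => g ((extChartAt 𝓘(ℝ, E) x₀).symm z))
      (extChartAt 𝓘(ℝ, E) x₀ x₀)
      = (mfderiv 𝓘(ℝ, E) 𝓘(ℝ) g x₀).comp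
          (mfderiv 𝓘(ℝ, E) 𝓘(ℝ, E) (extChartAt 𝓘(ℝ, E) x₀).symm (extChartAt 𝓘(ℝ, E) x₀ x₀)) := by
    rw [← mfderiv_eq_fderiv]
    have hgd' : MDifferentiableAt 𝓘(ℝ, E) 𝓘(ℝ) g
        ((extChartAt 𝓘(ℝ, E) x₀).symm (extChartAt 𝓘(ℝ, E) x₀ x₀)) := by
      rw [hinv]; exact (hg x₀).mdifferentiableAt (by simp)
    have := mfderiv_comp (I' := 𝓘(ℝ, E)) (extChartAt 𝓘(ℝ, E) x₀ x₀) hgd' hsymm_md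
    rw [hinv] at this
    exact this
  have hchain_f : fderiv ℝ (fun z => f ((extChartAt 𝓘(ℝ, E) x₀).symm z))
      (extChartAt 𝓘(ℝ, E) x₀ x₀)
      = (mfderiv 𝓘(ℝ, E) 𝓘(ℝ) f x₀).comp
          (mfderiv 𝓘(ℝ, E) 𝓘(ℝ, E) (extChartAt 𝓘(ℝ, E) x₀).symm (extChartAt 𝓘(ℝ, E) x₀ x₀)) := by
    rw [← mfderiv_eq_fderiv]
    have hfd' : MDifferentiableAt 𝓘(ℝ, E) 𝓘(ℝ) f
        ((extChartAt 𝓘(ℝ, E) x₀).symm (extChartAt 𝓘(ℝ, E) x₀ x₀)) := by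
      rw [hinv]; exact (hf x₀).mdifferentiableAt (by simp)
    have := mfderiv_comp (I' := 𝓘(ℝ, E)) (extChartAt 𝓘(ℝ, E) x₀ x₀) hfd' hsymm_md
    rw [hinv] at this
    exact this
  -- now compute
  rw [mlieBracket_eq (fun y => f y • X y) (fun y => g y • Y y) x₀, mlieBracket_eq X Y x₀,
    hPfX, hPgY]
  erw [flat_lieBracket_smul _ _ _ _ _ (pullback_diffAt X hX x₀) (pullback_diffAt Y hY x₀) hfd hgd]
  erw [map_sub, map_add, map_smul, map_smul, map_smul]
  erw [hinv, hPXz, hPYz]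
  have hcg : ∀ v : E, fderiv ℝ (fun z => g ((extChartAt 𝓘(ℝ, E) x₀).symm z))
      (extChartAt 𝓘(ℝ, E) x₀ x₀) v
      = mfderiv 𝓘(ℝ, E) 𝓘(ℝ) g x₀
          (mfderiv 𝓘(ℝ, E) 𝓘(ℝ, E) (extChartAt 𝓘(ℝ, E) x₀).symm (extChartAt 𝓘(ℝ, E) x₀ x₀) v) := by
    intro v; rw [hchain_g]; rfl
  have hcf : ∀ v : E, fderiv ℝ (fun z => f ((extChartAt 𝓘(ℝ, E) x₀).symm z))
      (extChartAt 𝓘(ℝ, E) x₀ x₀) v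
      = mfderiv 𝓘(ℝ, E) 𝓘(ℝ) f x₀
          (mfderiv 𝓘(ℝ, E) 𝓘(ℝ, E) (extChartAt 𝓘(ℝ, E) x₀).symm (extChartAt 𝓘(ℝ, E) x₀ x₀) v) := by
    intro v; rw [hchain_f]; rfl
  simp only [derivAlong]
  erw [hcg, hcf, hBA, hBA, hAinv, hAinv]


private lemma hBA_gen (x₀ : M) {x : M} (hx : x ∈ (extChartAt 𝓘(ℝ, E) x₀).source)
    (v : TangentSpace 𝓘(ℝ, E) x) :
    mfderiv 𝓘(ℝ, E) 𝓘(ℝ, E) (extChartAt 𝓘(ℝ, E) x₀).symm (extChartAt 𝓘(ℝ, E) x₀ x)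
      (mfderiv 𝓘(ℝ, E) 𝓘(ℝ, E) (extChartAt 𝓘(ℝ, E) x₀) x v) = v := by
  have h1 := mfderivWithin_extChartAt_symm_comp_mfderiv_extChartAt' (I := 𝓘(ℝ, E)) hx
  rw [mfdW_symm] at h1
  exact DFunLike.congr_fun h1 v

private lemma derivAlong_smooth (g : M → ℝ) (hg : ContMDiff 𝓘(ℝ, E) 𝓘(ℝ) (⊤ : ℕ∞) g)
    (X : ∀ x : M, TangentSpace 𝓘(ℝ, E) x)
    (hX : ContMDiff 𝓘(ℝ, E) 𝓘(ℝ, E).tangent (⊤ : ℕ∞)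
      (fun x : M => (⟨x, X x⟩ : TangentBundle 𝓘(ℝ, E) M))) :
    ContMDiff 𝓘(ℝ, E) 𝓘(ℝ) (⊤ : ℕ∞) (derivAlong g X) := by
  intro x₀
  have hmf : ContMDiffAt 𝓘(ℝ, E) 𝓘(ℝ, E →L[ℝ] ℝ) (⊤ : ℕ∞)
      (inTangentCoordinates 𝓘(ℝ, E) 𝓘(ℝ) id g (mfderiv 𝓘(ℝ, E) 𝓘(ℝ) g) x₀) x₀ :=
    (hg x₀).mfderiv_const (by simp)
  have happ := hmf.clm_apply (tcc_smoothAt X hX x₀)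
  apply happ.congr_of_eventuallyEq
  filter_upwards [extChartAt_source_mem_nhds (I := 𝓘(ℝ, E)) x₀] with x hx
  have hx' : x ∈ (chartAt E x₀).source := by rwa [extChartAt_source] at hx
  have hy' : g x ∈ (chartAt ℝ (g x₀)).source := by simp [chartAt_self_eq]
  simp only [derivAlong]
  rw [inTangentCoordinates_eq_mfderiv_comp hx' hy', ← mfderiv_ext_eq_tcc x₀ hx]
  simp only [id_eq, mfdW_symm]
  have hC : ∀ r : ℝ, mfderiv 𝓘(ℝ, ℝ) 𝓘(ℝ, ℝ) (extChartAt 𝓘(ℝ, ℝ) (g x₀)) (g x) r = r := by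
    intro r
    rw [extChartAt_model_space_eq_id, PartialEquiv.refl_coe, mfderiv_id]
    rfl
  have step : mfderiv 𝓘(ℝ, E) 𝓘(ℝ, ℝ) g x (X x)
      = mfderiv 𝓘(ℝ, ℝ) 𝓘(ℝ, ℝ) (extChartAt 𝓘(ℝ, ℝ) (g x₀)) (g x)
          (mfderiv 𝓘(ℝ, E) 𝓘(ℝ, ℝ) g x
            (mfderiv 𝓘(ℝ, E) 𝓘(ℝ, E) (extChartAt 𝓘(ℝ, E) x₀).symm (extChartAt 𝓘(ℝ, E) x₀ x)
              (mfderiv 𝓘(ℝ, E) 𝓘(ℝ, E) (extChartAt 𝓘(ℝ, E) x₀) x (X x)))) := by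
    rw [hBA_gen x₀ hx (X x)]; exact (hC _).symm
  exact step

end KeyFormula

/-- modulo vector fields of order `i+j-1`, the Lie bracket induces a
`C^∞(M)`-bilinear bracket: `⁅fX, gY⁆ ≡ fg⁅X,Y⁆ mod H^{i+j−1}`. -/
theorem mlieBracket_smul_smul_sub_mem
    {E : Type*} [NormedAddCommGroup E] [NormedSpace ℝ E] [FiniteDimensional ℝ E]
    {M : Type*} [TopologicalSpace M] [ChartedSpace E M]
    [IsManifold 𝓘(ℝ, E) (⊤ : ℕ∞) M]
    (H : ℕ → Set (∀ x : M, TangentSpace 𝓘(ℝ, E) x))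
    (hHsmooth : ∀ k, ∀ V ∈ H k, ContMDiff 𝓘(ℝ, E) 𝓘(ℝ, E).tangent (⊤ : ℕ∞)
      (fun x : M => (⟨x, V x⟩ : TangentBundle 𝓘(ℝ, E) M)))
    (hHmono : Monotone H)
    (hHadd : ∀ k, ∀ V ∈ H k, ∀ V' ∈ H k, (fun x => V x + V' x) ∈ H k)
    (hHsmul : ∀ k, ∀ h : M → ℝ, ContMDiff 𝓘(ℝ, E) 𝓘(ℝ) (⊤ : ℕ∞) h →
      ∀ V ∈ H k, (fun x => h x • V x) ∈ H k)
    (i j : ℕ) (hi : 1 ≤ i) (hj : 1 ≤ j)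
    (X Y : ∀ x : M, TangentSpace 𝓘(ℝ, E) x) (hXH : X ∈ H i) (hYH : Y ∈ H j)
    (hX : ContMDiff 𝓘(ℝ, E) 𝓘(ℝ, E).tangent (⊤ : ℕ∞)
      (fun x : M => (⟨x, X x⟩ : TangentBundle 𝓘(ℝ, E) M)))
    (hY : ContMDiff 𝓘(ℝ, E) 𝓘(ℝ, E).tangent (⊤ : ℕ∞)
      (fun x : M => (⟨x, Y x⟩ : TangentBundle 𝓘(ℝ, E) M)))
    (f g : M → ℝ)
    (hf : ContMDiff 𝓘(ℝ, E) 𝓘(ℝ) (⊤ : ℕ∞) f) (hg : ContMDiff 𝓘(ℝ, E) 𝓘(ℝ) (⊤ : ℕ∞) g) :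
    (fun x => mlieBracket 𝓘(ℝ, E) (fun y => f y • X y) (fun y => g y • Y y) x
        - (f x * g x) • mlieBracket 𝓘(ℝ, E) X Y x) ∈ H (i + j - 1) := by
  have hc1 : ContMDiff 𝓘(ℝ, E) 𝓘(ℝ) (⊤ : ℕ∞) (fun x => f x * derivAlong g X x) :=
    hf.mul (derivAlong_smooth g hg X hX)
  have hc2 : ContMDiff 𝓘(ℝ, E) 𝓘(ℝ) (⊤ : ℕ∞) (fun x => -(g x * derivAlong f Y x)) :=
    (hg.mul (derivAlong_smooth f hf Y hY)).neg
  have hm1 : (fun x => (f x * derivAlong g X x) • Y x) ∈ H (i + j - 1) :=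
    hHsmul _ _ hc1 Y (hHmono (show j ≤ i + j - 1 by omega) hYH)
  have hm2 : (fun x => (-(g x * derivAlong f Y x)) • X x) ∈ H (i + j - 1) :=
    hHsmul _ _ hc2 X (hHmono (show i ≤ i + j - 1 by omega) hXH)
  have hsum := hHadd _ _ hm1 _ hm2
  have heq : (fun x => mlieBracket 𝓘(ℝ, E) (fun y => f y • X y) (fun y => g y • Y y) x
        - (f x * g x) • mlieBracket 𝓘(ℝ, E) X Y x)
      = fun x => (f x * derivAlong g X x) • Y x + (-(g x * derivAlong f Y x)) • X x := by
    funext x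
    rw [mlieBracket_smul_formula X Y hX hY f g hf hg x]
    module
  rw [heq]
  exact hsum
end
end

section
/- Let E be a finite-dimensional real normed vector space, m ∈ ℕ, and let f : ℝ → E be a C^∞ function such that iteratedDeriv j f 0 = 0 for all j < m. Then there exists a C^∞ function g : ℝ → E such that f t = t^m • g t for all t ∈ ℝ. -/
open intervalIntegral Metric
open scoped ContDiff

namespace SmoothFactorAux

variable {E : Type*} [NormedAddCommGroup E] [NormedSpace ℝ E]

/-- The Hadamard-type integral operator. -/
noncomputable def G (k : ℕ) (h : ℝ → E) (t : ℝ) : E :=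
  ∫ s in (0:ℝ)..1, s ^ k • h (t * s)

lemma hasDerivAt_G [CompleteSpace E] (k : ℕ) (h : ℝ → E) (hh : ContDiff ℝ (⊤ : ℕ∞) h)
    (x₀ : ℝ) : HasDerivAt (G k h) (G (k+1) (deriv h) x₀) x₀ := by
  have hd : Differentiable ℝ h := hh.differentiable (by simp)
  have hdc : Continuous (deriv h) := (contDiff_infty_iff_deriv.mp hh).2.continuous
  obtain ⟨M, hM⟩ := (isCompact_Icc (a := -(|x₀|+1)) (b := |x₀|+1)).exists_bound_of_continuousOn
    hdc.continuousOn
  have key := hasDerivAt_integral_of_dominated_loc_of_deriv_le (μ := MeasureTheory.volume)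
    (a := (0:ℝ)) (b := 1)
    (F := fun x s => s ^ k • h (x * s)) (F' := fun x s => s ^ (k+1) • deriv h (x * s))
    (x₀ := x₀) (bound := fun _ => M) (Metric.ball_mem_nhds x₀ one_pos)
    (Filter.Eventually.of_forall fun x =>
      (Continuous.aestronglyMeasurable (by fun_prop)))
    (Continuous.intervalIntegrable (by fun_prop) 0 1)
    (Continuous.aestronglyMeasurable (by fun_prop))
    (Filter.Eventually.of_forall fun s hs x hx => ?_)
    (intervalIntegrable_const)
    (Filter.Eventually.of_forall fun s hs x hx => ?_)
  · exact key.2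
  · -- bound
    rw [Set.uIoc_of_le (by norm_num : (0:ℝ) ≤ 1)] at hs
    have hs0 : 0 ≤ s := le_of_lt hs.1
    have hs1 : s ≤ 1 := hs.2
    have h1 : ‖s ^ (k+1) • deriv h (x * s)‖ = s ^ (k+1) * ‖deriv h (x * s)‖ := by
      rw [norm_smul, Real.norm_eq_abs, abs_of_nonneg (pow_nonneg hs0 _)]
    have h2 : x * s ∈ Set.Icc (-(|x₀|+1)) (|x₀|+1) := by
      have hxb : |x| ≤ |x₀| + 1 := by
        have := mem_ball_iff_norm.mp hx
        calc |x| ≤ |x - x₀| + |x₀| := by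
              simpa using abs_add_le (x - x₀) x₀
          _ ≤ |x₀| + 1 := by
              rw [Real.norm_eq_abs] at this; linarith
      have : |x * s| ≤ |x₀| + 1 := by
        rw [abs_mul, abs_of_nonneg hs0]
        calc |x| * s ≤ |x| * 1 := by
              exact mul_le_mul_of_nonneg_left hs1 (abs_nonneg x)
          _ ≤ |x₀| + 1 := by simpa using hxb
      exact ⟨neg_le_of_abs_le this, le_of_abs_le this⟩
    calc ‖s ^ (k+1) • deriv h (x * s)‖ = s ^ (k+1) * ‖deriv h (x * s)‖ := h1
      _ ≤ 1 * ‖deriv h (x * s)‖ := by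
          apply mul_le_mul_of_nonneg_right _ (norm_nonneg _)
          exact pow_le_one₀ hs0 hs1
      _ = ‖deriv h (x * s)‖ := one_mul _
      _ ≤ M := hM _ h2
  · -- differentiability in x
    have h3 : HasDerivAt (fun x => h (x * s)) (s • deriv h (x * s)) x := by
      have := ((hd (x * s)).hasDerivAt).scomp (x := x)
        (hasDerivAt_mul_const s)
      simpa [Function.comp_def] using this
    have := h3.const_smul (s ^ k)
    convert this using 1
    · rfl
    · rw [smul_smul, ← pow_succ]

lemma contDiff_G_nat [CompleteSpace E] (n : ℕ) : ∀ (k : ℕ) (h : ℝ → E),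
    ContDiff ℝ (⊤ : ℕ∞) h → ContDiff ℝ (n : WithTop ℕ∞) (G k h) := by
  induction n with
  | zero =>
    intro k h hh
    rw [show ((0:ℕ) : WithTop ℕ∞) = 0 by norm_cast, contDiff_zero]
    have : Differentiable ℝ (G k h) := fun x => (hasDerivAt_G k h hh x).differentiableAt
    exact this.continuous
  | succ n ih =>
    intro k h hh
    have hdiff : Differentiable ℝ (G k h) := fun x => (hasDerivAt_G k h hh x).differentiableAt
    have hderiv : deriv (G k h) = G (k+1) (deriv h) :=
      funext fun x => (hasDerivAt_G k h hh x).deriv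
    rw [show ((n+1 : ℕ) : WithTop ℕ∞) = (n : WithTop ℕ∞) + 1 by norm_cast]
    rw [contDiff_succ_iff_deriv]
    refine ⟨hdiff, by simp, ?_⟩
    rw [hderiv]
    exact ih (k+1) (deriv h) (contDiff_infty_iff_deriv.mp hh).2

lemma contDiff_G [CompleteSpace E] (k : ℕ) (h : ℝ → E) (hh : ContDiff ℝ (⊤ : ℕ∞) h) :
    ContDiff ℝ (⊤ : ℕ∞) (G k h) := by
  rw [contDiff_infty]
  exact fun n => contDiff_G_nat n k h hh

lemma iteratedDeriv_G [CompleteSpace E] (j k : ℕ) (h : ℝ → E) (hh : ContDiff ℝ (⊤ : ℕ∞) h) :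
    iteratedDeriv j (G k h) = G (k + j) (iteratedDeriv j h) := by
  induction j generalizing k h with
  | zero => simp [iteratedDeriv_zero]
  | succ j ih =>
    rw [iteratedDeriv_succ', iteratedDeriv_succ']
    have hderiv : deriv (G k h) = G (k+1) (deriv h) :=
      funext fun x => (hasDerivAt_G k h hh x).deriv
    rw [hderiv, ih (k+1) (deriv h) (contDiff_infty_iff_deriv.mp hh).2,
      show k + 1 + j = k + (j+1) by omega]

lemma hadamard_step [CompleteSpace E] (f : ℝ → E) (hf : ContDiff ℝ (⊤ : ℕ∞) f)
    (hf0 : f 0 = 0) (t : ℝ) : f t = t • G 0 (deriv f) t := by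
  have hdc : Continuous (deriv f) := (contDiff_infty_iff_deriv.mp hf).2.continuous
  have hftc : ∫ u in (0:ℝ)..t, deriv f u = f t - f 0 :=
    intervalIntegral.integral_deriv_eq_sub
      (fun x _ => (hf.differentiable (by simp)) x)
      (hdc.intervalIntegrable 0 t)
  have hsub : t • ∫ s in (0:ℝ)..1, deriv f (t * s) = ∫ u in (0:ℝ)..t, deriv f u := by
    simpa only [mul_zero, mul_one] using intervalIntegral.smul_integral_comp_mul_left (a := (0:ℝ)) (b := 1)
      (deriv f) t
  have : G 0 (deriv f) t = ∫ s in (0:ℝ)..1, deriv f (t * s) := by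
    unfold G; simp
  rw [this, hsub, hftc, hf0, sub_zero]

end SmoothFactorAux

open SmoothFactorAux

/-- a smooth function `f : ℝ → E` whose derivatives of order `< m` all vanish
at `0` factors as `f t = t^m • g t` with `g` smooth. -/
theorem smooth_factor_pow
    {E : Type*} [NormedAddCommGroup E] [NormedSpace ℝ E] [FiniteDimensional ℝ E]
    (m : ℕ) (f : ℝ → E) (hf : ContDiff ℝ (⊤ : ℕ∞) f)
    (h : ∀ j : ℕ, j < m → iteratedDeriv j f 0 = 0) :
    ∃ g : ℝ → E, ContDiff ℝ (⊤ : ℕ∞) g ∧ ∀ t : ℝ, f t = t ^ m • g t := by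
  induction m generalizing f with
  | zero => exact ⟨f, hf, fun t => by simp⟩
  | succ m ih =>
    have hf0 : f 0 = 0 := by simpa using h 0 (Nat.succ_pos m)
    have hderiv_smooth : ContDiff ℝ (⊤ : ℕ∞) (deriv f) := (contDiff_infty_iff_deriv.mp hf).2
    set Gf := G 0 (deriv f) with hGf
    have hGsmooth : ContDiff ℝ (⊤ : ℕ∞) Gf := contDiff_G 0 (deriv f) hderiv_smooth
    have hGvanish : ∀ j : ℕ, j < m → iteratedDeriv j Gf 0 = 0 := by
      intro j hj
      rw [hGf, iteratedDeriv_G j 0 (deriv f) hderiv_smooth]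
      have : iteratedDeriv j (deriv f) 0 = 0 := by
        rw [← iteratedDeriv_succ']
        exact h (j+1) (by omega)
      unfold G
      have : ∀ s : ℝ, s ^ (0 + j) • iteratedDeriv j (deriv f) ((0:ℝ) * s) = 0 := by
        intro s; rw [zero_mul, this, smul_zero]
      simp only [this, intervalIntegral.integral_zero]
    obtain ⟨g, hg, hgeq⟩ := ih Gf hGsmooth hGvanish
    refine ⟨g, hg, fun t => ?_⟩
    rw [hadamard_step f hf hf0 t, ← hGf, hgeq t, smul_smul, ← pow_succ']
end

section
/- For each 1 ≤ i ≤ N let Y_i : ℝ → V be a C^∞ function with Y_i t ∈ W_i for all t, and define X : ℝ → V by X t := Σ_{i=1}^N t^i • Y_i t. Then X is C^∞ and for every k ∈ ℕ, iteratedDeriv k X 0 ∈ F^k. (This says the image of the map Φ^ψ, built from a splitting and the dilations, lands in the module 𝔛_H of sections of the tangent Lie algebroid.) -/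
open Finset

/-- If a function takes values in a submodule of a finite-dimensional space, so does its
derivative. -/
lemma deriv_mem_of_mem {V : Type*} [NormedAddCommGroup V] [NormedSpace ℝ V]
    [FiniteDimensional ℝ V] (W : Submodule ℝ V) (f : ℝ → V) (hf : ∀ t, f t ∈ W) (t : ℝ) :
    deriv f t ∈ W := by
  by_cases hd : DifferentiableAt ℝ f t
  · have h := hd.hasDerivAt
    rw [hasDerivAt_iff_tendsto_slope] at h
    have hclosed : IsClosed (W : Set V) := W.closed_of_finiteDimensional
    refine hclosed.mem_of_tendsto h ?_
    filter_upwards with y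
    exact W.smul_mem _ (W.sub_mem (hf y) (hf t))
  · rw [deriv_zero_of_not_differentiableAt hd]
    exact W.zero_mem

lemma iteratedDeriv_mem_of_mem {V : Type*} [NormedAddCommGroup V] [NormedSpace ℝ V]
    [FiniteDimensional ℝ V] (W : Submodule ℝ V) (f : ℝ → V) (hf : ∀ t, f t ∈ W) (k : ℕ) (t : ℝ) :
    iteratedDeriv k f t ∈ W := by
  induction k generalizing t with
  | zero => simpa using hf t
  | succ n ih =>
    rw [iteratedDeriv_succ]
    exact deriv_mem_of_mem W _ ih t

lemma iteratedDeriv_pow_smul_factor {V : Type*} [NormedAddCommGroup V] [NormedSpace ℝ V]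
    (f : ℝ → V) (hf : ContDiff ℝ (⊤ : ℕ∞) f) (i : ℕ) :
    ∀ k, k ≤ i → ∃ g : ℝ → V, ContDiff ℝ (⊤ : ℕ∞) g ∧
      iteratedDeriv k (fun t => t ^ i • f t) = fun t => t ^ (i - k) • g t := by
  intro k
  induction k with
  | zero => intro _; exact ⟨f, hf, by simp⟩
  | succ n ih =>
    intro hn
    obtain ⟨g, hg, hgeq⟩ := ih (Nat.le_of_succ_le hn)
    set m := i - (n + 1) with hm
    have hmn : i - n = m + 1 := by omega
    refine ⟨fun t => ((m : ℝ) + 1) • g t + t • deriv g t, ?_, ?_⟩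
    · exact (contDiff_const.smul hg).add (contDiff_id.smul (hg.iterate_deriv 1))
    · rw [iteratedDeriv_succ, hgeq]
      funext t
      have hd : HasDerivAt (fun t : ℝ => t ^ (i - n) • g t)
          (t ^ (i - n) • deriv g t + (((i - n : ℕ) : ℝ) * t ^ (i - n - 1)) • g t) t :=
        (hasDerivAt_pow (i - n) t).smul
          (hg.differentiable (by simp) t).hasDerivAt
      rw [hd.deriv]
      rw [hmn]
      simp only [Nat.add_sub_cancel, pow_succ]
      push_cast
      match_scalars <;> ring

lemma iteratedDeriv_pow_smul_zero {V : Type*} [NormedAddCommGroup V] [NormedSpace ℝ V]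
    (f : ℝ → V) (hf : ContDiff ℝ (⊤ : ℕ∞) f) {i k : ℕ} (hk : k < i) :
    iteratedDeriv k (fun t => t ^ i • f t) 0 = 0 := by
  obtain ⟨g, _, hgeq⟩ := iteratedDeriv_pow_smul_factor f hf i k hk.le
  rw [hgeq]
  simp [zero_pow (by omega : i - k ≠ 0)]

/-- if `Y_i : ℝ → V` are smooth with values in `W_i` and
`X t = Σ_{i=1}^N t^i • Y_i t`, then `X` is smooth and `iteratedDeriv k X 0 ∈ F^k`, where
`F^k = W_1 + ⋯ + W_{min(k,N)}`.  (The image of `Φ^ψ` lands in the module `𝔛_H`.) -/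
theorem image_of_Phi_mem_module
    {V : Type*} [NormedAddCommGroup V] [NormedSpace ℝ V] [FiniteDimensional ℝ V]
    (N : ℕ) (hN : 1 ≤ N) (W : ℕ → Submodule ℝ V)
    (hW : DirectSum.IsInternal W) (hW0 : W 0 = ⊥) (hWtop : ∀ i : ℕ, N < i → W i = ⊥)
    (Y : ℕ → ℝ → V)
    (hYsmooth : ∀ i ∈ Finset.Icc 1 N, ContDiff ℝ (⊤ : ℕ∞) (Y i))
    (hYW : ∀ i ∈ Finset.Icc 1 N, ∀ t : ℝ, Y i t ∈ W i)
    (X : ℝ → V) (hX : X = fun t => ∑ i ∈ Finset.Icc 1 N, t ^ i • Y i t) :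
    ContDiff ℝ (⊤ : ℕ∞) X ∧
      ∀ k : ℕ, iteratedDeriv k X 0 ∈ ⨆ i ∈ Finset.Icc 1 (min k N), W i := by
  have hterm : ∀ i ∈ Finset.Icc 1 N, ContDiff ℝ (⊤ : ℕ∞) (fun t : ℝ => t ^ i • Y i t) :=
    fun i hi => (contDiff_id.pow i).smul (hYsmooth i hi)
  have hXsmooth : ContDiff ℝ (⊤ : ℕ∞) X := by
    rw [hX]
    exact ContDiff.sum fun i hi => hterm i hi
  refine ⟨hXsmooth, fun k => ?_⟩
  have hsplit : iteratedDeriv k X 0 =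
      ∑ i ∈ Finset.Icc 1 N, iteratedDeriv k (fun t : ℝ => t ^ i • Y i t) 0 := by
    rw [hX]
    simp only [iteratedDeriv_eq_iteratedFDeriv]
    rw [show (fun t : ℝ => ∑ i ∈ Finset.Icc 1 N, t ^ i • Y i t)
        = (∑ i ∈ Finset.Icc 1 N, (fun t : ℝ => t ^ i • Y i t) ·) from rfl]
    rw [iteratedFDeriv_sum (fun i hi => (hterm i hi).of_le (mod_cast le_top))]
    simp
  rw [hsplit]
  refine Submodule.sum_mem _ fun i hi => ?_
  rw [Finset.mem_Icc] at hi
  by_cases hik : i ≤ k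
  · have hmem : iteratedDeriv k (fun t : ℝ => t ^ i • Y i t) 0 ∈ W i :=
      iteratedDeriv_mem_of_mem (W i) _
        (fun t => (W i).smul_mem _ (hYW i (Finset.mem_Icc.mpr hi) t)) k 0
    have hle : W i ≤ ⨆ j ∈ Finset.Icc 1 (min k N), W j :=
      le_iSup₂ (f := fun j (_ : j ∈ Finset.Icc 1 (min k N)) => W j) i
        (Finset.mem_Icc.mpr ⟨hi.1, le_min hik hi.2⟩)
    exact hle hmem
  · rw [iteratedDeriv_pow_smul_zero (Y i) (hYsmooth i (Finset.mem_Icc.mpr hi))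
      (by omega : k < i)]
    exact Submodule.zero_mem _
end

section
/- Let X : ℝ → V be a C^∞ function such that iteratedDeriv k X 0 ∈ F^k for every k ∈ ℕ. Then there exist C^∞ functions Y_1, …, Y_N : ℝ → V with Y_i t ∈ W_i for all t, such that X t = Σ_{i=1}^N t^i • Y_i t for all t ∈ ℝ. (Surjectivity of the map Φ^ψ onto the module 𝔛_H.) -/
open MeasureTheory Metric Set intervalIntegral
open scoped DirectSum

section Aux

variable {V : Type*} [NormedAddCommGroup V] [NormedSpace ℝ V] [CompleteSpace V]

noncomputable def auxJ (k : ℕ) (h : ℝ → V) (t : ℝ) : V :=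
  ∫ s in (0:ℝ)..1, s ^ k • h (s * t)

lemma auxJ_hasDerivAt (k : ℕ) {h : ℝ → V} (hh : ContDiff ℝ (⊤ : ℕ∞) h) (t : ℝ) :
    HasDerivAt (auxJ k h) (auxJ (k + 1) (deriv h) t) t := by
  have hc : Continuous h := hh.continuous
  have hd : Continuous (deriv h) := hh.continuous_deriv (by exact_mod_cast le_top)
  obtain ⟨C, hC⟩ := (isCompact_Icc (a := -(|t| + 1)) (b := |t| + 1)).exists_bound_of_continuousOn
    hd.continuousOn
  have h0C : (0:ℝ) ≤ C := le_trans (norm_nonneg _) (hC 0 (by constructor <;> [linarith [abs_nonneg t]; linarith [abs_nonneg t]]))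
  have := (intervalIntegral.hasDerivAt_integral_of_dominated_loc_of_deriv_le
    (F := fun x s => s ^ k • h (s * x)) (F' := fun x s => s ^ (k + 1) • deriv h (s * x))
    (x₀ := t) (a := 0) (b := 1) (bound := fun _ => C) (μ := volume) (Metric.ball_mem_nhds t one_pos)
    ?_ ?_ ?_ ?_ ?_ ?_).2
  · exact this
  · exact Filter.Eventually.of_forall fun x =>
      ((continuous_pow k).smul (hc.comp (continuous_mul_right x))).aestronglyMeasurable
  · exact ((continuous_pow k).smul (hc.comp (continuous_mul_right t))).intervalIntegrable 0 1
  · exact ((continuous_pow (k+1)).smul (hd.comp (continuous_mul_right t))).aestronglyMeasurable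
  · refine Filter.Eventually.of_forall fun s hs x hx => ?_
    rw [Set.uIoc_of_le (by norm_num : (0:ℝ) ≤ 1)] at hs
    have hs0 : 0 < s := hs.1
    have hs1 : s ≤ 1 := hs.2
    have hxb : |x| ≤ |t| + 1 := by
      have := mem_ball_iff_norm.mp hx
      rw [Real.norm_eq_abs] at this
      calc |x| = |t + (x - t)| := by ring_nf
        _ ≤ |t| + |x - t| := abs_add_le _ _
        _ ≤ |t| + 1 := by linarith
    have hsx : s * x ∈ Set.Icc (-(|t| + 1)) (|t| + 1) := by
      have : |s * x| ≤ |t| + 1 := by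
        rw [abs_mul]
        calc |s| * |x| ≤ 1 * (|t| + 1) := by
              apply mul_le_mul (by rw [abs_of_pos hs0]; exact hs1) hxb (abs_nonneg _) zero_le_one
          _ = |t| + 1 := one_mul _
      exact abs_le.mp this
    rw [norm_smul, Real.norm_eq_abs]
    calc |s ^ (k+1)| * ‖deriv h (s * x)‖ ≤ 1 * C := by
          apply mul_le_mul _ (hC _ hsx) (norm_nonneg _) zero_le_one
          rw [abs_pow, abs_of_pos hs0]
          exact pow_le_one₀ (le_of_lt hs0) hs1
      _ = C := one_mul _
  · exact intervalIntegrable_const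
  · refine Filter.Eventually.of_forall fun s _ x _ => ?_
    have h1 : HasDerivAt h (deriv h (s * x)) (s * x) :=
      ((hh.differentiable (by simp)) (s * x)).hasDerivAt
    have h2 : HasDerivAt (fun y : ℝ => s * y) s x := by
      simpa using (hasDerivAt_id x).const_mul s
    have h3 : HasDerivAt (fun y => h (s * y)) (s • deriv h (s * x)) x := h1.scomp x h2
    have h4 := h3.const_smul (s ^ k)
    convert h4 using 1
    · rfl
    · rw [smul_smul, ← pow_succ]

lemma auxJ_contDiff (k : ℕ) {h : ℝ → V} (hh : ContDiff ℝ (⊤ : ℕ∞) h) :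
    ContDiff ℝ (⊤ : ℕ∞) (auxJ k h) := by
  have key : ∀ n : ℕ, ∀ k : ℕ, ∀ h : ℝ → V, ContDiff ℝ (⊤ : ℕ∞) h →
      ContDiff ℝ (n : WithTop ℕ∞) (auxJ k h) := by
    intro n
    induction n with
    | zero =>
      intro k h hh
      rw [show ((0:ℕ) : WithTop ℕ∞) = 0 from rfl]
      exact contDiff_zero.mpr
        (Differentiable.continuous fun t => (auxJ_hasDerivAt k hh t).differentiableAt)
    | succ n ih =>
      intro k h hh
      have hdh : ContDiff ℝ (⊤ : ℕ∞) (deriv h) := (contDiff_infty_iff_deriv.mp hh).2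
      have hder : deriv (auxJ k h) = auxJ (k + 1) (deriv h) :=
        funext fun t => (auxJ_hasDerivAt k hh t).deriv
      rw [show (((n+1:ℕ)) : WithTop ℕ∞) = (n : WithTop ℕ∞) + 1 by norm_cast]
      refine contDiff_succ_iff_deriv.mpr ⟨fun t => (auxJ_hasDerivAt k hh t).differentiableAt,
        ?_, ?_⟩
      · intro hω; simp at hω
      · rw [hder]; exact ih (k+1) (deriv h) hdh
  rw [contDiff_infty]
  intro n
  exact key n k h hh

lemma auxJ_apply_zero (k : ℕ) (h : ℝ → V) :
    auxJ k h 0 = ((k : ℝ) + 1)⁻¹ • h 0 := by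
  unfold auxJ
  simp only [mul_zero]
  rw [intervalIntegral.integral_smul_const, integral_pow]
  norm_num

lemma auxJ_iteratedDeriv (m k : ℕ) {h : ℝ → V} (hh : ContDiff ℝ (⊤ : ℕ∞) h) :
    iteratedDeriv m (auxJ k h) = auxJ (k + m) (iteratedDeriv m h) := by
  induction m generalizing k h with
  | zero => simp [iteratedDeriv_zero]
  | succ m ih =>
    rw [iteratedDeriv_succ']
    have hder : deriv (auxJ k h) = auxJ (k + 1) (deriv h) :=
      funext fun t => (auxJ_hasDerivAt k hh t).deriv
    rw [hder, ih (k+1) (contDiff_infty_iff_deriv.mp hh).2, ← iteratedDeriv_succ']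
    ring_nf

lemma factor_once {f : ℝ → V} (hf : ContDiff ℝ (⊤ : ℕ∞) f) (h0 : f 0 = 0) (t : ℝ) :
    f t = t • auxJ 0 (deriv f) t := by
  rcases eq_or_ne t 0 with rfl | ht
  · simp [h0]
  · have hd : Continuous (deriv f) := hf.continuous_deriv (by exact_mod_cast le_top)
    have key : auxJ 0 (deriv f) t = t⁻¹ • ∫ u in (0:ℝ)..t, deriv f u := by
      unfold auxJ
      simp only [pow_zero, one_smul]
      rw [intervalIntegral.integral_comp_mul_right (fun u => deriv f u) ht]
      norm_num
    have hftc : ∫ u in (0:ℝ)..t, deriv f u = f t - f 0 := by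
      apply intervalIntegral.integral_deriv_eq_sub
      · exact fun x _ => (hf.differentiable (by simp)) x
      · exact hd.intervalIntegrable 0 t
    rw [key, hftc, h0, sub_zero, smul_smul, mul_inv_cancel₀ ht, one_smul]

lemma smooth_division : ∀ (n : ℕ) (f : ℝ → V), ContDiff ℝ (⊤ : ℕ∞) f →
    (∀ k < n, iteratedDeriv k f 0 = 0) →
    ∃ g : ℝ → V, ContDiff ℝ (⊤ : ℕ∞) g ∧ ∀ t, f t = t ^ n • g t := by
  intro n
  induction n with
  | zero => intro f hf _; exact ⟨f, hf, fun t => by simp⟩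
  | succ n ih =>
    intro f hf hz
    have h0 : f 0 = 0 := by simpa [iteratedDeriv_zero] using hz 0 (Nat.succ_pos n)
    have hdf : ContDiff ℝ (⊤ : ℕ∞) (deriv f) := (contDiff_infty_iff_deriv.mp hf).2
    set g₁ := auxJ 0 (deriv f) with hg₁
    have hg₁s : ContDiff ℝ (⊤ : ℕ∞) g₁ := auxJ_contDiff 0 hdf
    have hg₁z : ∀ k < n, iteratedDeriv k g₁ 0 = 0 := by
      intro k hk
      rw [hg₁, auxJ_iteratedDeriv k 0 hdf, zero_add, auxJ_apply_zero,
        ← iteratedDeriv_succ', hz (k+1) (by omega), smul_zero]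
    obtain ⟨g, hgs, hgeq⟩ := ih g₁ hg₁s hg₁z
    refine ⟨g, hgs, fun t => ?_⟩
    rw [factor_once hf h0 t, ← hg₁, hgeq t, smul_smul, ← pow_succ']

end Aux

/-- conversely, a smooth `X : ℝ → V` with `iteratedDeriv k X 0 ∈ F^k` for all `k`
can be written as `X t = Σ_{i=1}^N t^i • Y_i t` with `Y_i` smooth and valued in `W_i`.
(Surjectivity of `Φ^ψ` onto the module `𝔛_H`.) -/
theorem Phi_surjective
    {V : Type*} [NormedAddCommGroup V] [NormedSpace ℝ V] [FiniteDimensional ℝ V]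
    (N : ℕ) (hN : 1 ≤ N) (W : ℕ → Submodule ℝ V)
    (hW : DirectSum.IsInternal W) (hW0 : W 0 = ⊥) (hWtop : ∀ i : ℕ, N < i → W i = ⊥)
    (X : ℝ → V) (hX : ContDiff ℝ (⊤ : ℕ∞) X)
    (hXF : ∀ k : ℕ, iteratedDeriv k X 0 ∈ ⨆ i ∈ Finset.Icc 1 (min k N), W i) :
    ∃ Y : ℕ → ℝ → V,
      (∀ i ∈ Finset.Icc 1 N, ContDiff ℝ (⊤ : ℕ∞) (Y i)) ∧
      (∀ i ∈ Finset.Icc 1 N, ∀ t : ℝ, Y i t ∈ W i) ∧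
      (∀ t : ℝ, X t = ∑ i ∈ Finset.Icc 1 N, t ^ i • Y i t) := by
  classical
  have : CompleteSpace V := FiniteDimensional.complete ℝ V
  let e : (⨁ i, W i) ≃ₗ[ℝ] V := LinearEquiv.ofBijective (DirectSum.coeLinearMap W) hW
  let π : ℕ → V →ₗ[ℝ] V := fun i =>
    (W i).subtype ∘ₗ (DirectSum.component ℝ ℕ (fun i => W i) i) ∘ₗ (e.symm : V →ₗ[ℝ] ⨁ i, W i)
  have hπ_apply : ∀ i v, π i v = ((e.symm v) i : V) := fun i v => rfl
  have hπ_mem : ∀ i v, π i v ∈ W i := fun i v => by rw [hπ_apply]; exact SetLike.coe_mem _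
  have hπ_same : ∀ i v, v ∈ W i → π i v = v := by
    intro i v hv
    rw [hπ_apply]
    exact congrArg Subtype.val (hW.ofBijective_coeLinearMap_of_mem hv)
  have hπ_ne : ∀ i j v, i ≠ j → v ∈ W i → π j v = 0 := by
    intro i j v hij hv
    rw [hπ_apply]
    exact congrArg Subtype.val (hW.ofBijective_coeLinearMap_of_mem_ne hij hv)
  have hsum : ∀ v, ∑ i ∈ Finset.Icc 1 N, π i v = v := by
    intro v
    have hv : v ∈ ⨆ i, W i := by rw [hW.submodule_iSup_eq_top]; trivial
    refine Submodule.iSup_induction W (motive := fun v => ∑ i ∈ Finset.Icc 1 N, π i v = v) hv ?_ ?_ ?_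
    · intro j x hx
      by_cases hj : j ∈ Finset.Icc 1 N
      · rw [Finset.sum_eq_single_of_mem j hj (fun b _ hbj => hπ_ne j b x (Ne.symm hbj) hx)]
        exact hπ_same j x hx
      · have hjb : W j = ⊥ := by
          rw [Finset.mem_Icc] at hj
          rcases Nat.lt_or_ge j 1 with h1 | h1
          · interval_cases j; exact hW0
          · exact hWtop j (by omega)
        have hx0 : x = 0 := by rw [hjb] at hx; simpa using hx
        simp [hx0]
    · simp
    · intro x y hx hy
      simp only [map_add, Finset.sum_add_distrib, hx, hy]
  let L : ℕ → V →L[ℝ] V := fun i => LinearMap.toContinuousLinearMap (π i)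
  let Xi : ℕ → ℝ → V := fun i t => π i (X t)
  have hXi_smooth : ∀ i, ContDiff ℝ (⊤ : ℕ∞) (Xi i) := by
    intro i
    have : Xi i = (L i) ∘ X := rfl
    rw [this]
    exact (L i).contDiff.comp hX
  have hXi_zero : ∀ i, ∀ k < i, iteratedDeriv k (Xi i) 0 = 0 := by
    intro i k hk
    have hcomp : iteratedDeriv k (Xi i) 0 = π i (iteratedDeriv k X 0) := by
      have h1 := (L i).iteratedFDeriv_comp_left (hX.contDiffAt (x := (0 : ℝ))) (i := k)
        (by exact_mod_cast le_top)
      have h2 : iteratedDeriv k (Xi i) 0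
          = (iteratedFDeriv ℝ k (⇑(L i) ∘ X) 0) (fun _ => 1) := rfl
      rw [h2, h1]
      rfl
    rw [hcomp]
    have hker : (⨆ j ∈ Finset.Icc 1 (min k N), W j) ≤ LinearMap.ker (π i) := by
      refine iSup₂_le fun j hj => ?_
      rw [Finset.mem_Icc] at hj
      intro w hw
      exact LinearMap.mem_ker.mpr (hπ_ne j i w (by omega) hw)
    exact LinearMap.mem_ker.mp (hker (hXF k))
  have hdiv : ∀ i, ∃ g : ℝ → V, ContDiff ℝ (⊤ : ℕ∞) g ∧ ∀ t, Xi i t = t ^ i • g t :=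
    fun i => smooth_division i (Xi i) (hXi_smooth i) (hXi_zero i)
  choose g hg1 hg2 using hdiv
  refine ⟨fun i t => π i (g i t), ?_, ?_, ?_⟩
  · intro i _
    show ContDiff ℝ (⊤ : ℕ∞) fun t => π i (g i t)
    exact (L i).contDiff.comp (hg1 i)
  · intro i _ t
    exact hπ_mem i (g i t)
  · intro t
    have key : ∀ i, t ^ i • π i (g i t) = Xi i t := by
      intro i
      rw [← _root_.map_smul, ← hg2 i t]
      exact hπ_same i (Xi i t) (hπ_mem i (X t))
    calc X t = ∑ i ∈ Finset.Icc 1 N, π i (X t) := (hsum (X t)).symm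
      _ = ∑ i ∈ Finset.Icc 1 N, t ^ i • π i (g i t) := by
          refine Finset.sum_congr rfl fun i _ => ?_
          rw [key i]
      _ = _ := rfl
end

section
/- Let A : V → V be a linear map such that for every k with 1 ≤ k ≤ N, A maps W_k into F^k and (A − id) maps W_k into F^{k−1} (i.e. A preserves the filtration and induces the identity on each graded quotient). Then there is a map B : ℝ → (V →ₗ[ℝ] V), polynomial in t (in particular C^∞), such that B 0 = id and δ_t ∘ B t = A ∘ δ_t for every t ∈ ℝ; in particular for t ≠ 0, B t = δ_t⁻¹ ∘ A ∘ δ_t, and this family extends smoothly through t = 0 with value the identity. (This is the change-of-splitting statement showing the smooth structure on the tangent Lie algebroid is independent of the choice of splitting.) -/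
/-- change of splitting.  If a linear map `A` preserves the filtration
`F^k = W_1 + ⋯ + W_{min(k,N)}` and induces the identity on each graded quotient, then
`B t := δ_t⁻¹ ∘ A ∘ δ_t` (for `t ≠ 0`) extends to a family of linear maps, polynomial in `t`
(in particular `C^∞`), with `B 0 = id` and `δ_t ∘ B t = A ∘ δ_t` for all `t`. -/
theorem change_of_splitting
    {V : Type*} [NormedAddCommGroup V] [NormedSpace ℝ V] [FiniteDimensional ℝ V]
    (N : ℕ) (hN : 1 ≤ N) (W : ℕ → Submodule ℝ V)
    (hW : DirectSum.IsInternal W) (hW0 : W 0 = ⊥) (hWtop : ∀ i : ℕ, N < i → W i = ⊥)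
    (δ : ℝ → V →ₗ[ℝ] V)
    (hδ : ∀ (t : ℝ) (i : ℕ), ∀ x ∈ W i, δ t x = t ^ i • x)
    (A : V →ₗ[ℝ] V)
    (hA1 : ∀ k : ℕ, 1 ≤ k → k ≤ N → ∀ x ∈ W k,
      A x ∈ ⨆ i ∈ Finset.Icc 1 (min k N), W i)
    (hA2 : ∀ k : ℕ, 1 ≤ k → k ≤ N → ∀ x ∈ W k,
      A x - x ∈ ⨆ i ∈ Finset.Icc 1 (min (k - 1) N), W i) :
    ∃ B : ℝ → V →ₗ[ℝ] V,
      (∃ (n : ℕ) (C : ℕ → V →ₗ[ℝ] V),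
        ∀ t : ℝ, B t = ∑ j ∈ Finset.range (n + 1), t ^ j • C j) ∧
      (∀ x : V, ContDiff ℝ (⊤ : ℕ∞) fun t : ℝ => B t x) ∧
      B 0 = LinearMap.id ∧
      (∀ t : ℝ, (δ t) ∘ₗ (B t) = A ∘ₗ (δ t)) ∧
      (∀ t : ℝ, t ≠ 0 → B t = (δ t⁻¹) ∘ₗ A ∘ₗ (δ t)) := by
  classical
  set e : DirectSum ℕ (fun i => W i) ≃ₗ[ℝ] V :=
    LinearEquiv.ofBijective (DirectSum.coeLinearMap W) hW with he
  set π : ℕ → V →ₗ[ℝ] V := fun i =>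
    (W i).subtype ∘ₗ (DirectSum.component ℝ ℕ (fun i => W i) i) ∘ₗ e.symm.toLinearMap
    with hπ
  have hπ_apply : ∀ (i : ℕ) (x : V), π i x = ((e.symm x) i : V) := fun i x => rfl
  have hπ_mem : ∀ (i : ℕ) (x : V), π i x ∈ W i := fun i x => ((e.symm x) i).2
  have hπ_same : ∀ (i : ℕ) (x : V), x ∈ W i → π i x = x := by
    intro i x hx
    rw [hπ_apply, hW.ofBijective_coeLinearMap_of_mem hx]
  have hπ_ne : ∀ (i j : ℕ) (x : V), x ∈ W i → j ≠ i → π j x = 0 := by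
    intro i j x hx hij
    rw [hπ_apply, hW.ofBijective_coeLinearMap_of_mem_ne (Ne.symm hij) hx]
    rfl
  -- extensionality against the decomposition
  have hext : ∀ f g : V →ₗ[ℝ] V, (∀ i, ∀ x ∈ W i, f x = g x) → f = g := by
    intro f g h
    ext x
    have hx : x ∈ ⨆ i, W i := hW.submodule_iSup_eq_top ▸ Submodule.mem_top
    refine Submodule.iSup_induction (motive := fun y => f y = g y) W hx
      (fun i y hy => h i y hy) (by simp) ?_
    intro y z hy hz
    simp [map_add, hy, hz]
  -- the sum of projections is the identity
  have hsum : ∀ x : V, ∑ i ∈ Finset.range (N + 1), π i x = x := by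
    intro x
    have hx : x ∈ ⨆ i, W i := hW.submodule_iSup_eq_top ▸ Submodule.mem_top
    refine Submodule.iSup_induction
      (motive := fun y => ∑ i ∈ Finset.range (N + 1), π i y = y) W hx ?_ (by simp) ?_
    · intro i y hy
      by_cases hi : i ≤ N
      · rw [Finset.sum_eq_single_of_mem i (Finset.mem_range.mpr (by omega))
          (fun j _ hj => hπ_ne i j y hy hj)]
        exact hπ_same i y hy
      · have : y = 0 := by
          have := hWtop i (by omega)
          simpa [this] using hy
        simp [this]
    · intro y z hy hz
      simp [map_add, Finset.sum_add_distrib, hy, hz]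
  -- projections kill lower filtration pieces with higher index
  have hπF : ∀ (m i : ℕ), m < i → ∀ x ∈ (⨆ j ∈ Finset.Icc 1 m, W j), π i x = 0 := by
    intro m i him x hx
    have hle : (⨆ j ∈ Finset.Icc 1 m, W j) ≤ LinearMap.ker (π i) := by
      refine iSup_le fun j => iSup_le fun hj y hy => ?_
      have hjm : j ≤ m := (Finset.mem_Icc.mp hj).2
      exact LinearMap.mem_ker.mpr (hπ_ne j i y hy (by omega))
    exact hle hx
  -- structure of A with respect to the graduation
  have hAhigh : ∀ k, 1 ≤ k → k ≤ N → ∀ x ∈ W k, ∀ i, k < i → π i (A x) = 0 := by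
    intro k hk1 hkN x hx i hki
    have h1 := hA1 k hk1 hkN x hx
    rw [min_eq_left hkN] at h1
    exact hπF k i hki _ h1
  have hAdiag : ∀ k, 1 ≤ k → k ≤ N → ∀ x ∈ W k, π k (A x) = x := by
    intro k hk1 hkN x hx
    have h2 := hA2 k hk1 hkN x hx
    rw [min_eq_left (by omega)] at h2
    have h0 : π k (A x - x) = 0 := hπF (k - 1) k (by omega) _ h2
    rw [map_sub, hπ_same k x hx, sub_eq_zero] at h0
    exact h0
  -- the coefficients and the family B
  set C : ℕ → V →ₗ[ℝ] V := fun j =>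
    ∑ k ∈ Finset.range (N + 1), if j ≤ k then π (k - j) ∘ₗ A ∘ₗ π k else 0 with hC
  set B : ℝ → V →ₗ[ℝ] V := fun t => ∑ j ∈ Finset.range (N + 1), t ^ j • C j with hB
  -- value of C j on an element of W m (for m ≤ N)
  have hCval : ∀ (j m : ℕ), m ≤ N → ∀ x ∈ W m,
      C j x = if j ≤ m then π (m - j) (A x) else 0 := by
    intro j m hm x hx
    rw [hC]
    simp only [LinearMap.coe_sum, Finset.sum_apply]
    rw [Finset.sum_eq_single_of_mem m (Finset.mem_range.mpr (by omega))]
    · by_cases hjm : j ≤ m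
      · simp [hjm, LinearMap.comp_apply, hπ_same m x hx]
      · simp [hjm]
    · intro k _ hk
      by_cases hjk : j ≤ k
      · simp [hjk, LinearMap.comp_apply, hπ_ne m k x hx hk]
      · simp [hjk]
  -- main intertwining identity
  have hmain : ∀ t : ℝ, (δ t) ∘ₗ (B t) = A ∘ₗ (δ t) := by
    intro t
    refine hext _ _ fun m x hx => ?_
    by_cases hm0 : m = 0
    · have : x = 0 := by simpa [hm0, hW0] using hx
      simp [this]
    by_cases hmN : m ≤ N
    · -- the interesting case 1 ≤ m ≤ N
      have hδx : δ t x = t ^ m • x := hδ t m x hx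
      have hRHS : (A ∘ₗ δ t) x = t ^ m • A x := by
        simp [LinearMap.comp_apply, hδx]
      rw [hRHS, LinearMap.comp_apply]
      have hBx : B t x = ∑ j ∈ Finset.range (m + 1), t ^ j • π (m - j) (A x) := by
        rw [hB]
        simp only [LinearMap.coe_sum, Finset.sum_apply, LinearMap.smul_apply]
        rw [← Finset.sum_subset (Finset.range_subset_range.mpr (by omega : m + 1 ≤ N + 1))]
        · refine Finset.sum_congr rfl fun j hj => ?_
          rw [hCval j m hmN x hx, if_pos (by simpa using Nat.lt_succ_iff.mp (Finset.mem_range.mp hj))]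
        · intro j hjN hj
          have hjm : ¬ j ≤ m := fun h => hj (Finset.mem_range.mpr (by omega))
          rw [hCval j m hmN x hx, if_neg hjm]
          simp
      rw [hBx, map_sum]
      have hterm : ∀ j ∈ Finset.range (m + 1),
          δ t (t ^ j • π (m - j) (A x)) = t ^ m • π (m - j) (A x) := by
        intro j hj
        have hjm : j ≤ m := Nat.lt_succ_iff.mp (Finset.mem_range.mp hj)
        rw [map_smul, hδ t (m - j) _ (hπ_mem (m - j) (A x)), smul_smul, ← pow_add,
          Nat.add_sub_cancel' hjm]
      rw [Finset.sum_congr rfl hterm, ← Finset.smul_sum]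
      congr 1
      have hrefl : ∑ j ∈ Finset.range (m + 1), π (m - j) (A x)
          = ∑ i ∈ Finset.range (m + 1), π i (A x) := by
        rw [← Finset.sum_range_reflect (fun i => π i (A x)) (m + 1)]
        simp
      rw [hrefl, Finset.sum_subset (Finset.range_subset_range.mpr (by omega : m + 1 ≤ N + 1))
        (fun i hi hi2 => hAhigh m (by omega) hmN x hx i (by simp at hi hi2; omega))]
      exact hsum (A x)
    · have : x = 0 := by simpa [hWtop m (by omega)] using hx
      simp [this]
  refine ⟨B, ⟨N, C, fun t => rfl⟩, ?_, ?_, hmain, ?_⟩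
  · -- smoothness
    intro x
    have : (fun t : ℝ => B t x) = fun t => ∑ j ∈ Finset.range (N + 1), t ^ j • C j x := by
      funext t
      simp [hB]
    rw [this]
    exact ContDiff.sum fun j _ => (contDiff_id.pow j).smul contDiff_const
  · -- B 0 = id
    refine hext _ _ fun m x hx => ?_
    have hB0 : B 0 x = C 0 x := by
      rw [hB]
      simp only [LinearMap.coe_sum, Finset.sum_apply, LinearMap.smul_apply]
      rw [Finset.sum_eq_single_of_mem 0 (Finset.mem_range.mpr (by omega))]
      · norm_num
      · intro j _ hj
        simp [zero_pow hj]
    rw [hB0, LinearMap.id_apply]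
    by_cases hm0 : m = 0
    · have : x = 0 := by simpa [hm0, hW0] using hx
      simp [this]
    by_cases hmN : m ≤ N
    · rw [hCval 0 m hmN x hx, if_pos (by omega)]
      simpa using hAdiag m (by omega) hmN x hx
    · have : x = 0 := by simpa [hWtop m (by omega)] using hx
      simp [this]
  · -- inversion for t ≠ 0
    intro t ht
    have hinv : (δ t⁻¹) ∘ₗ (δ t) = LinearMap.id := by
      refine hext _ _ fun m x hx => ?_
      rw [LinearMap.comp_apply, hδ t m x hx, map_smul, hδ t⁻¹ m x hx, smul_smul,
        ← mul_pow, mul_inv_cancel₀ ht, one_pow, one_smul, LinearMap.id_apply]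
    calc B t = LinearMap.id ∘ₗ B t := by rw [LinearMap.id_comp]
      _ = ((δ t⁻¹) ∘ₗ (δ t)) ∘ₗ B t := by rw [hinv]
      _ = (δ t⁻¹) ∘ₗ ((δ t) ∘ₗ B t) := by rw [LinearMap.comp_assoc]
      _ = (δ t⁻¹) ∘ₗ A ∘ₗ (δ t) := by rw [hmain t]
end

section
/- For each 1 ≤ i ≤ N let Y_i : ℝ → V be a C^∞ function with Y_i t ∈ W_i for all t, and define X : ℝ → V by X t := Σ_{i=1}^N t^i • Y_i t. Then for every i with 1 ≤ i ≤ N, ((i)!⁻¹ : ℝ) • iteratedDeriv i X 0 − Y_i 0 ∈ F^{i−1}. (This says the evaluation map ev_0^H, whose i-th component is the class of (1/i!)·∂_t^i X|_{t=0} modulo F^{i−1}, agrees with restriction to t = 0 under the isomorphism Φ^ψ.) -/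
section AuxEvZero
open Finset

variable {V : Type*} [NormedAddCommGroup V] [NormedSpace ℝ V]




lemma aux_deriv_mem (p : Submodule ℝ V) (hp : IsClosed (p : Set V))
    (g : ℝ → V) (hg : ∀ t, g t ∈ p) (t : ℝ) : deriv g t ∈ p := by
  by_cases h : DifferentiableAt ℝ g t
  · have h' := h.hasDerivAt
    rw [hasDerivAt_iff_tendsto_slope] at h'
    refine hp.mem_of_tendsto h' (Filter.Eventually.of_forall fun x => ?_)
    exact p.smul_mem _ (p.sub_mem (hg x) (hg t))
  · rw [deriv_zero_of_not_differentiableAt h]; exact p.zero_mem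

lemma aux_iteratedDeriv_mem (p : Submodule ℝ V) (hp : IsClosed (p : Set V))
    (g : ℝ → V) (hg : ∀ t, g t ∈ p) (k : ℕ) (t : ℝ) : iteratedDeriv k g t ∈ p := by
  induction k generalizing g t with
  | zero => simpa using hg t
  | succ k ih =>
    rw [iteratedDeriv_succ']
    exact ih _ (fun s => aux_deriv_mem p hp g hg s) _

lemma aux_iteratedDeriv_add {f g : ℝ → V} {n : ℕ} (hf : ContDiff ℝ (⊤ : ℕ∞) f)
    (hg : ContDiff ℝ (⊤ : ℕ∞) g) (x : ℝ) :
    iteratedDeriv n (fun t => f t + g t) x = iteratedDeriv n f x + iteratedDeriv n g x := by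
  simp only [← iteratedDerivWithin_univ]
  exact iteratedDerivWithin_add (Set.mem_univ x) uniqueDiffOn_univ
    (hf.contDiffWithinAt.of_le (by exact_mod_cast (le_top : (n : ℕ∞) ≤ ⊤)))
    (hg.contDiffWithinAt.of_le (by exact_mod_cast (le_top : (n : ℕ∞) ≤ ⊤)))

lemma aux_iteratedDeriv_const_smul {f : ℝ → V} {n : ℕ} (hf : ContDiff ℝ (⊤ : ℕ∞) f)
    (c : ℝ) (x : ℝ) :
    iteratedDeriv n (fun t => c • f t) x = c • iteratedDeriv n f x := by
  simp only [← iteratedDerivWithin_univ]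
  exact iteratedDerivWithin_const_smul (Set.mem_univ x) uniqueDiffOn_univ c
    (hf.contDiffWithinAt.of_le (by exact_mod_cast (le_top : (n : ℕ∞) ≤ ⊤)))

lemma aux_key (g : ℝ → V) (hg : ContDiff ℝ (⊤ : ℕ∞) g) (j k : ℕ) :
    iteratedDeriv k (fun t => t ^ j • g t) 0 =
      if j ≤ k then ((k.choose j * j.factorial : ℕ) : ℝ) • iteratedDeriv (k - j) g 0
      else 0 := by
  induction k generalizing j g with
  | zero =>
    rcases Nat.eq_zero_or_pos j with rfl | hj
    · simp
    · simp only [iteratedDeriv_zero, zero_pow hj.ne', zero_smul]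
      rw [if_neg (by omega)]
  | succ k ih =>
    have hg' : ContDiff ℝ (⊤:ℕ∞) (deriv g) := by simpa using hg.iterate_deriv 1
    have hd : deriv (fun t => t ^ j • g t)
        = fun t => (j : ℝ) • (t ^ (j - 1) • g t) + t ^ j • deriv g t := by
      funext t
      rw [deriv_fun_smul (differentiableAt_pow j)
        ((hg.differentiable (by simp)).differentiableAt)]
      rw [deriv_pow_field]
      module
    have hsm1 : ContDiff ℝ (⊤ : ℕ∞) (fun t : ℝ => (j:ℝ) • (t ^ (j-1) • g t)) :=
      ((contDiff_id.pow _).smul hg).const_smul _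
    have hsm2 : ContDiff ℝ (⊤ : ℕ∞) (fun t : ℝ => t ^ j • deriv g t) :=
      (contDiff_id.pow _).smul hg'
    have hsm0 : ContDiff ℝ (⊤ : ℕ∞) (fun t : ℝ => t ^ (j - 1) • g t) :=
      (contDiff_id.pow _).smul hg
    rw [iteratedDeriv_succ', hd,
      aux_iteratedDeriv_add hsm1 hsm2 0,
      aux_iteratedDeriv_const_smul hsm0 (j:ℝ) 0,
      ih g hg (j-1), ih (deriv g) hg' j]
    have hderiv : ∀ m, iteratedDeriv m (deriv g) 0 = iteratedDeriv (m+1) g 0 := by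
      intro m; rw [iteratedDeriv_succ']
    rcases Nat.eq_zero_or_pos j with rfl | hj
    · simp [hderiv]
    · obtain ⟨j', rfl⟩ : ∃ j', j = j' + 1 := ⟨j - 1, by omega⟩
      simp only [Nat.add_sub_cancel]
      by_cases hc : j' ≤ k
      · rw [if_pos hc, if_pos (by omega : j' + 1 ≤ k + 1),
          show k + 1 - (j' + 1) = k - j' from by omega]
        by_cases hc2 : j' + 1 ≤ k
        · rw [if_pos hc2, hderiv, show k - (j' + 1) + 1 = k - j' from by omega,
            smul_smul, ← add_smul]
          congr 1
          push_cast [Nat.choose_succ_succ, Nat.factorial_succ]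
          ring
        · rw [if_neg hc2,
            show (0:V) = ((k.choose (j'+1) * (j'+1).factorial : ℕ) : ℝ) •
              iteratedDeriv (k - j') g 0 from by
                simp [Nat.choose_eq_zero_of_lt (by omega : k < j' + 1)],
            smul_smul, ← add_smul]
          congr 1
          push_cast [Nat.choose_succ_succ, Nat.factorial_succ]
          ring
      · rw [if_neg hc, if_neg (by omega : ¬ j' + 1 ≤ k),
          if_neg (by omega : ¬ j' + 1 ≤ k + 1)]
        simp



lemma aux_iteratedDeriv_add' {f g : ℝ → V} {n : ℕ} (hf : ContDiff ℝ (⊤ : ℕ∞) f)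
    (hg : ContDiff ℝ (⊤ : ℕ∞) g) (x : ℝ) :
    iteratedDeriv n (fun t => f t + g t) x = iteratedDeriv n f x + iteratedDeriv n g x := by
  simp only [← iteratedDerivWithin_univ]
  exact iteratedDerivWithin_add (Set.mem_univ x) uniqueDiffOn_univ
    (hf.contDiffWithinAt.of_le (by exact_mod_cast (le_top : (n : ℕ∞) ≤ ⊤)))
    (hg.contDiffWithinAt.of_le (by exact_mod_cast (le_top : (n : ℕ∞) ≤ ⊤)))

lemma aux_iteratedDeriv_sum {ι : Type*} (s : Finset ι) (f : ι → ℝ → V)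
    (hf : ∀ j ∈ s, ContDiff ℝ (⊤ : ℕ∞) (f j)) (n : ℕ) (x : ℝ) :
    iteratedDeriv n (fun t => ∑ j ∈ s, f j t) x = ∑ j ∈ s, iteratedDeriv n (f j) x := by
  classical
  induction s using Finset.induction with
  | empty => simp [iteratedDeriv_eq_iteratedFDeriv, iteratedFDeriv_zero_fun]
  | insert a s' hnot ih =>
    simp only [Finset.sum_insert hnot]
    rw [aux_iteratedDeriv_add' (hf a (Finset.mem_insert_self a s'))
      (ContDiff.sum fun j hj => hf j (Finset.mem_insert_of_mem hj)),
      ih (fun j hj => hf j (Finset.mem_insert_of_mem hj))]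

end AuxEvZero

/-- with `X t = Σ_{i=1}^N t^i • Y_i t` as before, the `i`-th component of the
evaluation map `ev_0^H`, namely the class of `(1/i!)·∂_t^i X|_{t=0}` modulo
`F^{i-1} = W_1 + ⋯ + W_{min(i-1,N)}`, agrees with `Y_i 0`. -/
theorem ev_zero_agrees
    {V : Type*} [NormedAddCommGroup V] [NormedSpace ℝ V] [FiniteDimensional ℝ V]
    (N : ℕ) (hN : 1 ≤ N) (W : ℕ → Submodule ℝ V)
    (hW : DirectSum.IsInternal W) (hW0 : W 0 = ⊥) (hWtop : ∀ i : ℕ, N < i → W i = ⊥)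
    (Y : ℕ → ℝ → V)
    (hYsmooth : ∀ i ∈ Finset.Icc 1 N, ContDiff ℝ (⊤ : ℕ∞) (Y i))
    (hYW : ∀ i ∈ Finset.Icc 1 N, ∀ t : ℝ, Y i t ∈ W i)
    (X : ℝ → V) (hX : X = fun t => ∑ i ∈ Finset.Icc 1 N, t ^ i • Y i t) :
    ∀ i ∈ Finset.Icc 1 N,
      ((i.factorial : ℝ)⁻¹) • iteratedDeriv i X 0 - Y i 0
        ∈ ⨆ l ∈ Finset.Icc 1 (min (i - 1) N), W l := by
  intro i hi
  obtain ⟨hi1, hi2⟩ := Finset.mem_Icc.mp hi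
  -- compute the iterated derivative
  have hXd : iteratedDeriv i X 0 = ∑ j ∈ Finset.Icc 1 N,
      (if j ≤ i then ((i.choose j * j.factorial : ℕ) : ℝ) • iteratedDeriv (i - j) (Y j) 0
       else 0) := by
    rw [hX, aux_iteratedDeriv_sum _ (fun j (t : ℝ) => t ^ j • Y j t)
      (fun j hj => ((contDiff_id.pow j).smul (hYsmooth j hj) :
        ContDiff ℝ (⊤ : ℕ∞) (fun t : ℝ => t ^ j • Y j t)))]
    exact Finset.sum_congr rfl fun j hj => aux_key (Y j) (hYsmooth j hj) j i
  rw [hXd, Finset.smul_sum, ← Finset.add_sum_erase _ _ hi]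
  have hterm_i : (i.factorial : ℝ)⁻¹ •
      (if i ≤ i then ((i.choose i * i.factorial : ℕ) : ℝ) • iteratedDeriv (i - i) (Y i) 0
       else 0) = Y i 0 := by
    rw [if_pos le_rfl, Nat.choose_self, one_mul, Nat.sub_self, iteratedDeriv_zero, smul_smul,
      inv_mul_cancel₀ (by exact_mod_cast i.factorial_ne_zero), one_smul]
  rw [hterm_i, add_sub_cancel_left]
  refine Submodule.sum_mem _ fun j hj => ?_
  obtain ⟨hji, hjIcc⟩ := Finset.mem_erase.mp hj
  obtain ⟨hj1, hjN⟩ := Finset.mem_Icc.mp hjIcc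
  by_cases hjle : j ≤ i
  · rw [if_pos hjle]
    have hjmem : j ∈ Finset.Icc 1 (min (i - 1) N) := by
      rw [Finset.mem_Icc]
      exact ⟨hj1, le_min (by omega) hjN⟩
    have hWj : iteratedDeriv (i - j) (Y j) 0 ∈ W j :=
      aux_iteratedDeriv_mem (W j) (Submodule.closed_of_finiteDimensional (W j))
        (Y j) (hYW j hjIcc) _ _
    have hle : W j ≤ ⨆ l ∈ Finset.Icc 1 (min (i - 1) N), W l :=
      le_iSup₂ (f := fun l (_ : l ∈ Finset.Icc 1 (min (i - 1) N)) => W l) j hjmem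
    exact Submodule.smul_mem _ _ (Submodule.smul_mem _ _ (hle hWj))
  · rw [if_neg hjle, smul_zero]
    exact Submodule.zero_mem _
end
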